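/- Let n ≥ 2, q ≥ 1, and let β₀, β₁, …, β_{n−2} be real numbers. Let G = Σ_{k=0}^{n−2} β_k (F ⊗ E_k^{(n−2)}) and let Γ′ be the (C(n,2)·q^{n−1}) × q^n matrix obtained by stacking the matrices G_{a,b} over all pairs 1 ≤ a < b ≤ n. Then ‖Γ′‖² ≤ n² · max_{0 ≤ k ≤ n−2} β_k². -/

import Mathlib

noncomputable section

namespace ED

/-- The `q × q` matrix all of whose entries are `1/q`. -/
def E0 (q : ℕ) : Matrix (Fin q) (Fin q) ℝ := Matrix.of fun _ _ => 1 / q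

/-- `E₁ = I - E₀`. -/
def E1 (q : ℕ) : Matrix (Fin q) (Fin q) ℝ :=
  Matrix.of fun x y => (if x = y then 1 else 0) - 1 / q

/-- The projector `E_k^{(m)}` of the Hamming association scheme. -/
def Ek (q m k : ℕ) : Matrix (Fin m → Fin q) (Fin m → Fin q) ℝ :=
  Matrix.of fun x y => ∑ S ∈ Finset.powersetCard k (Finset.univ : Finset (Fin m)),
    ∏ i, (if i ∈ S then E1 q (x i) (y i) else E0 q (x i) (y i))

/-- The `q × q²` matrix with all entries `q^{-3/2}`. -/
def F0 (q : ℕ) : Matrix (Fin q) (Fin q × Fin q) ℝ :=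
  Matrix.of fun _ _ => ((q : ℝ) * Real.sqrt q)⁻¹

/-- The `q × q²` matrix with entries `q^{-1/2}((E₁)_{x,y₁} + (E₁)_{x,y₂})`. -/
def F1 (q : ℕ) : Matrix (Fin q) (Fin q × Fin q) ℝ :=
  Matrix.of fun x y => (Real.sqrt q)⁻¹ * (E1 q x y.1 + E1 q x y.2)

/-- `F = F₀ + F₁`. -/
def FF (q : ℕ) : Matrix (Fin q) (Fin q × Fin q) ℝ := F0 q + F1 q

/-- The increasing enumeration of `[n] \ {a,b}`. -/
def embCompl {n : ℕ} (a b : Fin n) (h : a ≠ b) : Fin (n - 2) → Fin n :=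
  fun i => (({a, b}ᶜ : Finset (Fin n)).orderIsoOfFin
    (by rw [Finset.card_compl, Finset.card_pair h, Fintype.card_fin]) i : Fin n)

/-- For a `q^{n-1} × q^n` matrix `G` (rows indexed by `[q] × [q]^{n-2}`, columns by
`([q] × [q]) × [q]^{n-2}`), the matrix `G_{a,b}` with rows indexed by strings
`x ∈ [q]^n` with `x a = x b`, and columns by `[q]^n`. -/
def subMat {n q : ℕ}
    (G : Matrix (Fin q × (Fin (n - 2) → Fin q)) ((Fin q × Fin q) × (Fin (n - 2) → Fin q)) ℝ)
    (a b : Fin n) (h : a ≠ b) :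
    Matrix {x : Fin n → Fin q // x a = x b} (Fin n → Fin q) ℝ :=
  Matrix.of fun x y =>
    G (x.1 a, fun i => x.1 (embCompl a b h i)) ((y a, y b), fun i => y (embCompl a b h i))

/-- The spectral norm (largest singular value) of a real matrix. -/
def specNorm {m n : Type*} [Fintype m] [Fintype n] [DecidableEq n] (A : Matrix m n ℝ) : ℝ :=
  ‖LinearMap.toContinuousLinearMap (Matrix.toEuclideanLin A)‖

end ED

namespace ED

/-- The tensor product `A ⊗ E_k^{(n-2)}` of a `q × q²` matrix `A` with `E_k^{(n-2)}`:
a `q^{n-1} × q^n` matrix with rows indexed by `[q] × [q]^{n-2}` and columns by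
`([q] × [q]) × [q]^{n-2}`. -/
def tens (n q : ℕ) (A : Matrix (Fin q) (Fin q × Fin q) ℝ) (k : ℕ) :
    Matrix (Fin q × (Fin (n - 2) → Fin q)) ((Fin q × Fin q) × (Fin (n - 2) → Fin q)) ℝ :=
  Matrix.of fun r c => A r.1 c.1 * Ek q (n - 2) k r.2 c.2

end ED

namespace ED

/-- The matrix `Γ′` obtained by stacking the matrices `G_{a,b}` over all pairs `a < b`. -/
def stacked {n q : ℕ}
    (G : Matrix (Fin q × (Fin (n - 2) → Fin q)) ((Fin q × Fin q) × (Fin (n - 2) → Fin q)) ℝ) :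
    Matrix ((p : {p : Fin n × Fin n // p.1 < p.2}) ×
      {x : Fin n → Fin q // x p.1.1 = x p.1.2}) (Fin n → Fin q) ℝ :=
  Matrix.of fun r y => subMat G r.1.1.1 r.1.1.2 (ne_of_lt r.1.2) r.2 y

end ED


namespace EDProof

open ED Matrix Kronecker Finset

variable {n q : ℕ}

lemma qne (hq : 1 ≤ q) : (q : ℝ) ≠ 0 := by
  positivity

lemma E0_transpose : (E0 q)ᵀ = E0 q := by ext x y; simp [E0, Matrix.transpose_apply]

lemma E1_transpose : (E1 q)ᵀ = E1 q := by
  ext x y; simp [E1, Matrix.transpose_apply, eq_comm]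

lemma sum_E1_row (hq : 1 ≤ q) (x : Fin q) : ∑ y, E1 q x y = 0 := by
  have := qne hq
  simp [E1, Finset.sum_sub_distrib, Finset.card_univ]
  field_simp
  norm_num

lemma E0_mul_E0 (hq : 1 ≤ q) : E0 q * E0 q = E0 q := by
  have := qne hq
  ext x y
  simp [E0, Matrix.mul_apply, Finset.sum_const, Finset.card_univ]
  field_simp

lemma E0_mul_E1 (hq : 1 ≤ q) : E0 q * E1 q = 0 := by
  have := qne hq
  ext x y
  simp only [E0, E1, Matrix.mul_apply, Matrix.of_apply, Matrix.zero_apply]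
  rw [Finset.sum_congr rfl (fun z _ => by ring : ∀ z ∈ Finset.univ,
    1/(q:ℝ) * ((if z = y then 1 else 0) - 1/q) = (1/(q:ℝ)) * (if z = y then 1 else 0) - 1/q*(1/q))]
  rw [Finset.sum_sub_distrib, ← Finset.mul_sum, Finset.sum_ite_eq']
  simp [Finset.card_univ]
  field_simp
  simp

lemma E1_mul_E0 (hq : 1 ≤ q) : E1 q * E0 q = 0 := by
  have := qne hq
  ext x y
  simp only [E0, E1, Matrix.mul_apply, Matrix.of_apply, Matrix.zero_apply]
  rw [Finset.sum_congr rfl (fun z _ => by ring : ∀ z ∈ Finset.univ,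
    ((if x = z then 1 else 0) - 1/(q:ℝ)) * (1/q) = (1/(q:ℝ)) * (if x = z then 1 else 0) - 1/q*(1/q))]
  rw [Finset.sum_sub_distrib, ← Finset.mul_sum, Finset.sum_ite_eq]
  simp [Finset.card_univ]
  field_simp
  simp

lemma E0_add_E1 : E0 q + E1 q = 1 := by
  ext x y
  simp [E0, E1, Matrix.one_apply]

lemma E1_mul_E1 (hq : 1 ≤ q) : E1 q * E1 q = E1 q := by
  have h1 : E1 q * (E0 q + E1 q) = E1 q := by rw [E0_add_E1, mul_one]
  calc E1 q * E1 q = E1 q * (E0 q + E1 q) - E1 q * E0 q := by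
        rw [mul_add]; abel
  _ = E1 q := by rw [h1, E1_mul_E0 hq, sub_zero]

/-- auxiliary: entrywise product matrices -/
def piMat (q : ℕ) {m : ℕ} (A : Fin m → Matrix (Fin q) (Fin q) ℝ) :
    Matrix (Fin m → Fin q) (Fin m → Fin q) ℝ :=
  Matrix.of fun x y => ∏ i, A i (x i) (y i)

lemma piMat_mul (A B : Fin m → Matrix (Fin q) (Fin q) ℝ) :
    piMat q A * piMat q B = piMat q (fun i => A i * B i) := by
  ext x y
  simp only [piMat, Matrix.mul_apply, Matrix.of_apply]
  have h : ∀ z : Fin m → Fin q, (∏ i, A i (x i) (z i)) * ∏ i, B i (z i) (y i)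
      = ∏ i, (A i (x i) (z i) * B i (z i) (y i)) := fun z => by
    rw [← Finset.prod_mul_distrib]
  simp_rw [h]
  rw [Finset.prod_univ_sum]
  rw [Fintype.piFinset_univ]

lemma piMat_transpose (A : Fin m → Matrix (Fin q) (Fin q) ℝ)
    (hA : ∀ i, (A i)ᵀ = A i) : (piMat q A)ᵀ = piMat q A := by
  ext x y
  simp only [piMat, Matrix.transpose_apply, Matrix.of_apply]
  refine Finset.prod_congr rfl fun i _ => ?_
  conv_lhs => rw [show A i = (A i)ᵀ from (hA i).symm]
  rw [Matrix.transpose_apply]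

def DS (q : ℕ) {m : ℕ} (S : Finset (Fin m)) : Fin m → Matrix (Fin q) (Fin q) ℝ :=
  fun i => if i ∈ S then E1 q else E0 q

lemma Ek_eq_sum (k : ℕ) :
    Ek q m k = ∑ S ∈ Finset.powersetCard k (Finset.univ : Finset (Fin m)),
      piMat q (DS q S) := by
  ext x y
  simp only [Ek, Matrix.of_apply, Matrix.sum_apply, piMat, DS]
  refine Finset.sum_congr rfl fun S _ => Finset.prod_congr rfl fun i _ => ?_
  by_cases hi : i ∈ S <;> simp [hi]

lemma DS_mul (hq : 1 ≤ q) (S T : Finset (Fin m)) :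
    piMat q (DS q S) * piMat q (DS q T) =
      if S = T then piMat q (DS q S) else 0 := by
  rw [piMat_mul]
  by_cases hST : S = T
  · subst hST
    rw [if_pos rfl]
    have hfun : (fun i => DS q S i * DS q S i) = DS q S := funext fun i => by
      by_cases hi : i ∈ S <;> simp [DS, hi, E1_mul_E1 hq, E0_mul_E0 hq]
    rw [hfun]
  · rw [if_neg hST]
    obtain ⟨i, hi⟩ : ∃ i, ¬ (i ∈ S ↔ i ∈ T) := by
      by_contra hc
      push_neg at hc
      exact hST (Finset.ext hc)
    have hz : DS q S i * DS q T i = 0 := by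
      simp only [DS]
      by_cases h1 : i ∈ S <;> by_cases h2 : i ∈ T <;>
        simp [h1, h2, E0_mul_E1 hq, E1_mul_E0 hq] at hi ⊢
    ext x y
    simp only [piMat, Matrix.of_apply, Matrix.zero_apply]
    exact Finset.prod_eq_zero (Finset.mem_univ i) (by rw [hz]; rfl)

lemma Ek_mul_Ek (hq : 1 ≤ q) (k j : ℕ) :
    Ek q m k * Ek q m j = if k = j then Ek q m k else 0 := by
  rw [Ek_eq_sum k, Ek_eq_sum j, Finset.sum_mul_sum]
  simp_rw [DS_mul hq]
  by_cases hkj : k = j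
  · subst hkj
    rw [if_pos rfl]
    refine Finset.sum_congr rfl fun S hS => ?_
    rw [Finset.sum_ite_eq _ S (fun _ => piMat q (DS q S)), if_pos hS]
  · rw [if_neg hkj]
    refine Finset.sum_eq_zero fun S hS => Finset.sum_eq_zero fun T hT => ?_
    rw [if_neg]
    rintro rfl
    exact hkj ((Finset.mem_powersetCard.mp hS).2.symm.trans
      (Finset.mem_powersetCard.mp hT).2)

lemma Ek_transpose (k : ℕ) : (Ek q m k)ᵀ = Ek q m k := by
  ext x y
  simp only [Matrix.transpose_apply, Ek, Matrix.of_apply]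
  refine Finset.sum_congr rfl fun S _ => Finset.prod_congr rfl fun i _ => ?_
  by_cases hi : i ∈ S <;> simp [hi, E0, E1, eq_comm]

lemma sum_Ek : ∑ k ∈ Finset.range (m + 1), Ek q m k = 1 := by
  ext x y
  rw [Matrix.sum_apply]
  simp only [Ek, Matrix.of_apply]
  rw [show m + 1 = (Finset.univ : Finset (Fin m)).card + 1 by simp]
  rw [← Finset.sum_powerset]
  rw [Finset.powerset_univ]
  have hterm : ∀ S : Finset (Fin m),
      (∏ i, (if i ∈ S then E1 q (x i) (y i) else E0 q (x i) (y i)))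
      = (∏ i ∈ S, E1 q (x i) (y i)) * ∏ i ∈ Sᶜ, E0 q (x i) (y i) := by
    intro S
    rw [← Finset.prod_mul_prod_compl S]
    congr 1
    · exact Finset.prod_congr rfl fun i hi => if_pos hi
    · exact Finset.prod_congr rfl fun i hi => if_neg (Finset.mem_compl.mp hi)
  simp_rw [hterm]
  rw [← Fintype.prod_add]
  have : ∀ i, E1 q (x i) (y i) + E0 q (x i) (y i)
      = if x i = y i then (1:ℝ) else 0 := by
    intro i; simp [E0, E1]
  simp_rw [this]
  rw [Finset.prod_boole]
  simp [Matrix.one_apply, funext_iff]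

lemma sum_E1_mul (hq : 1 ≤ q) (x x' : Fin q) :
    ∑ y, E1 q x y * E1 q x' y = E1 q x x' := by
  have h := congrFun (congrFun (E1_mul_E1 hq) x) x'
  rw [Matrix.mul_apply] at h
  rw [← h]
  refine Finset.sum_congr rfl fun y _ => ?_
  congr 1
  exact congrFun (congrFun (E1_transpose (q := q)) y) x'

lemma FF_mul_FFt (hq : 1 ≤ q) : FF q * (FF q)ᵀ = E0 q + 2 • E1 q := by
  have hs : Real.sqrt q * Real.sqrt q = (q : ℝ) :=
    Real.mul_self_sqrt (by positivity)
  have hsne : Real.sqrt q ≠ 0 := by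
    have : (0:ℝ) < q := by exact_mod_cast hq
    positivity
  have hqne := qne hq
  ext x x'
  simp only [FF, F0, F1, Matrix.add_apply, Matrix.mul_apply, Matrix.transpose_apply,
    Matrix.add_apply, Matrix.of_apply]
  rw [Fintype.sum_prod_type]
  set t : ℝ := ((q : ℝ) * Real.sqrt q)⁻¹ with ht
  set s : ℝ := (Real.sqrt q)⁻¹ with hss
  have expand : ∀ y1 y2 : Fin q,
      (t + s * (E1 q x y1 + E1 q x y2)) * (t + s * (E1 q x' y1 + E1 q x' y2))
      = (t*t + t*s*E1 q x' y1 + t*s*E1 q x' y2 + s*t*E1 q x y1 + s*t*E1 q x y2)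
        + (s*s*(E1 q x y1 * E1 q x' y1) + s*s*(E1 q x y2 * E1 q x' y2))
        + (s*s*(E1 q x y1 * E1 q x' y2) + s*s*(E1 q x y2 * E1 q x' y1)) := by
    intro y1 y2; ring
  simp_rw [expand]
  rw [Finset.sum_congr rfl (fun y1 _ => by
    rw [Finset.sum_add_distrib, Finset.sum_add_distrib])]
  rw [Finset.sum_add_distrib, Finset.sum_add_distrib]
  have hrow := sum_E1_row hq
  have hmul := sum_E1_mul hq
  have hA : ∑ y1 : Fin q, ∑ y2 : Fin q,
      (t*t + t*s*E1 q x' y1 + t*s*E1 q x' y2 + s*t*E1 q x y1 + s*t*E1 q x y2)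
      = (q:ℝ) * ((q:ℝ) * (t*t)) := by
    simp only [Finset.sum_add_distrib, Finset.sum_const, Finset.card_univ,
      Fintype.card_fin, nsmul_eq_mul, ← Finset.mul_sum, hrow, mul_zero, add_zero]
  have hB : ∑ y1 : Fin q, ∑ y2 : Fin q,
      (s*s*(E1 q x y1 * E1 q x' y1) + s*s*(E1 q x y2 * E1 q x' y2))
      = 2 * ((q:ℝ) * (s * s * E1 q x x')) := by
    simp only [Finset.sum_add_distrib, Finset.sum_const, Finset.card_univ,
      Fintype.card_fin, nsmul_eq_mul, ← Finset.mul_sum, hmul]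
    ring
  have hC : ∑ y1 : Fin q, ∑ y2 : Fin q,
      (s*s*(E1 q x y1 * E1 q x' y2) + s*s*(E1 q x y2 * E1 q x' y1)) = 0 := by
    simp only [Finset.sum_add_distrib, ← Finset.mul_sum, ← Finset.sum_mul, hrow,
      mul_zero, zero_mul, add_zero]
    simp [← Finset.sum_mul, ← Finset.mul_sum, hrow]
  rw [hA, hB, hC]
  have h1 : (q:ℝ) * ((q:ℝ) * (t*t)) = 1 / q := by
    rw [ht]; field_simp
    rw [Real.sq_sqrt (by positivity)]
  have h2 : 2 * ((q:ℝ) * (s * s * E1 q x x')) = 2 * E1 q x x' := by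
    rw [hss]
    field_simp
    rw [Real.sq_sqrt (by positivity)]
  rw [h1, h2, add_zero]
  simp [E0, Matrix.add_apply, Matrix.smul_apply]

lemma qf_nonneg {ι : Type*} [Fintype ι] (P : Matrix ι ι ℝ) (hs : Pᵀ = P)
    (hi : P * P = P) (u : ι → ℝ) : 0 ≤ u ⬝ᵥ P *ᵥ u := by
  have h1 : P *ᵥ u = u ᵥ* P := by
    conv_lhs => rw [← hs]
    exact Matrix.mulVec_transpose P u
  have h2 : u ⬝ᵥ P *ᵥ u = (P *ᵥ u) ⬝ᵥ (P *ᵥ u) := by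
    conv_lhs => rw [← hi, ← Matrix.mulVec_mulVec, Matrix.dotProduct_mulVec]
    rw [← h1]
  rw [h2]
  exact Finset.sum_nonneg fun i _ => mul_self_nonneg _

lemma sum_mulVec {ι κ : Type*} [Fintype ι] [Fintype κ] {γ : Type*} (K : Finset γ)
    (A : γ → Matrix ι κ ℝ) (u : κ → ℝ) :
    (∑ k ∈ K, A k) *ᵥ u = ∑ k ∈ K, A k *ᵥ u := by
  ext i
  simp [Matrix.mulVec, dotProduct, Matrix.sum_apply, Finset.sum_mul]
  rw [Finset.sum_comm]

lemma dot_sum {ι : Type*} [Fintype ι] {γ : Type*} (K : Finset γ)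
    (u : ι → ℝ) (w : γ → ι → ℝ) :
    u ⬝ᵥ (∑ k ∈ K, w k) = ∑ k ∈ K, u ⬝ᵥ w k := by
  simp only [dotProduct, Finset.sum_apply, Finset.mul_sum]
  rw [Finset.sum_comm]

lemma kronecker_sumR {ι κ : Type*} [Fintype ι] [Fintype κ] {γ : Type*} (K : Finset γ)
    (C : Matrix (Fin q) (Fin q) ℝ) (A : γ → Matrix ι κ ℝ) :
    C ⊗ₖ (∑ k ∈ K, A k) = ∑ k ∈ K, C ⊗ₖ A k := by
  ext ⟨a, b⟩ ⟨c, d⟩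
  simp [Matrix.kroneckerMap_apply, Matrix.sum_apply, Finset.mul_sum]

def Gmat (q m : ℕ) (β : ℕ → ℝ) :
    Matrix (Fin q × (Fin m → Fin q)) ((Fin q × Fin q) × (Fin m → Fin q)) ℝ :=
  ∑ k ∈ Finset.range (m + 1), β k • (FF q ⊗ₖ Ek q m k)

lemma GGt (hq : 1 ≤ q) (β : ℕ → ℝ) :
    Gmat q m β * (Gmat q m β)ᵀ
      = ∑ k ∈ Finset.range (m + 1), (β k ^ 2) • ((E0 q + 2 • E1 q) ⊗ₖ Ek q m k) := by
  rw [Gmat, Matrix.transpose_sum, Matrix.sum_mul]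
  simp_rw [Matrix.mul_sum]
  have hterm : ∀ k j, (β k • (FF q ⊗ₖ Ek q m k)) * (β j • (FF q ⊗ₖ Ek q m j))ᵀ
      = (β k * β j) • (if k = j then (E0 q + 2 • E1 q) ⊗ₖ Ek q m k else 0) := by
    intro k j
    rw [Matrix.transpose_smul, ← Matrix.kroneckerMap_transpose, Ek_transpose,
      Matrix.smul_mul, Matrix.mul_smul, smul_smul, ← Matrix.mul_kronecker_mul,
      FF_mul_FFt hq, Ek_mul_Ek hq]
    by_cases h : k = j <;> simp [h]
  simp_rw [hterm]
  refine Finset.sum_congr rfl fun k hk => ?_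
  rw [Finset.sum_congr rfl (fun j _ => by
    rw [smul_ite, smul_zero] : ∀ j ∈ Finset.range (m+1), (β k * β j) •
      (if k = j then (E0 q + 2 • E1 q) ⊗ₖ Ek q m k else 0)
      = if k = j then (β k * β j) • ((E0 q + 2 • E1 q) ⊗ₖ Ek q m k) else 0)]
  rw [Finset.sum_ite_eq _ k fun j => (β k * β j) • ((E0 q + 2 • E1 q) ⊗ₖ Ek q m k),
    if_pos hk]
  rw [← sq]

lemma qf_G_le (hq : 1 ≤ q) (β : ℕ → ℝ) (B : ℝ) (hB0 : 0 ≤ B)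
    (hB : ∀ k ∈ Finset.range (m + 1), β k ^ 2 ≤ B)
    (u : Fin q × (Fin m → Fin q) → ℝ) :
    u ⬝ᵥ (Gmat q m β * (Gmat q m β)ᵀ) *ᵥ u ≤ 2 * B * (u ⬝ᵥ u) := by
  have hE1s : (E1 q)ᵀ = E1 q := E1_transpose
  have hE1m : E1 q * E1 q = E1 q := E1_mul_E1 hq
  -- nonnegativity of per-k quadratic forms
  have key : ∀ (D : Matrix (Fin m → Fin q) (Fin m → Fin q) ℝ), Dᵀ = D → D * D = D →
      (u ⬝ᵥ ((E0 q + 2 • E1 q) ⊗ₖ D) *ᵥ u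
        = u ⬝ᵥ (E0 q ⊗ₖ D) *ᵥ u + 2 * (u ⬝ᵥ (E1 q ⊗ₖ D) *ᵥ u))
      ∧ 0 ≤ u ⬝ᵥ (E0 q ⊗ₖ D) *ᵥ u ∧ 0 ≤ u ⬝ᵥ (E1 q ⊗ₖ D) *ᵥ u := by
    intro D hDs hDi
    have h0 : (0:ℝ) ≤ u ⬝ᵥ (E0 q ⊗ₖ D) *ᵥ u :=
      qf_nonneg _ (by rw [← Matrix.kroneckerMap_transpose, E0_transpose, hDs])
        (by rw [← Matrix.mul_kronecker_mul, E0_mul_E0 hq, hDi]) u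
    have h1 : (0:ℝ) ≤ u ⬝ᵥ (E1 q ⊗ₖ D) *ᵥ u :=
      qf_nonneg _ (by rw [← Matrix.kroneckerMap_transpose, hE1s, hDs])
        (by rw [← Matrix.mul_kronecker_mul, hE1m, hDi]) u
    refine ⟨?_, h0, h1⟩
    have hsplit : (E0 q + 2 • E1 q) ⊗ₖ D = E0 q ⊗ₖ D + (2:ℝ) • (E1 q ⊗ₖ D) := by
      ext x y
      rcases x with ⟨a, b⟩; rcases y with ⟨c, d⟩
      simp only [Matrix.kroneckerMap_apply, Matrix.add_apply, Matrix.smul_apply]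
      simp only [nsmul_eq_mul, smul_eq_mul]
      push_cast
      ring
    rw [hsplit, Matrix.add_mulVec, dotProduct_add, Matrix.smul_mulVec,
      dotProduct_smul, smul_eq_mul]
  have hEk : ∀ k, (Ek q m k : Matrix (Fin m → Fin q) (Fin m → Fin q) ℝ)ᵀ = Ek q m k ∧
      Ek q m k * Ek q m k = Ek q m k := fun k =>
    ⟨Ek_transpose k, by rw [Ek_mul_Ek hq, if_pos rfl]⟩
  have hone : (1 : Matrix (Fin m → Fin q) (Fin m → Fin q) ℝ)ᵀ = 1 ∧
      (1 : Matrix (Fin m → Fin q) (Fin m → Fin q) ℝ) * 1 = 1 :=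
    ⟨Matrix.transpose_one, one_mul 1⟩
  have hqf : ∀ k, 0 ≤ u ⬝ᵥ ((E0 q + 2 • E1 q) ⊗ₖ Ek q m k) *ᵥ u := by
    intro k
    obtain ⟨he, h0, h1⟩ := key (Ek q m k) (hEk k).1 (hEk k).2
    rw [he]; linarith
  -- the sum over k of the quadratic forms is at most 2 (u ⬝ᵥ u)
  have hsum : ∑ k ∈ Finset.range (m + 1), u ⬝ᵥ ((E0 q + 2 • E1 q) ⊗ₖ Ek q m k) *ᵥ u
      ≤ 2 * (u ⬝ᵥ u) := by
    have h1 : ∑ k ∈ Finset.range (m + 1), u ⬝ᵥ ((E0 q + 2 • E1 q) ⊗ₖ Ek q m k) *ᵥ u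
        = u ⬝ᵥ ((E0 q + 2 • E1 q) ⊗ₖ (1 : Matrix (Fin m → Fin q) (Fin m → Fin q) ℝ)) *ᵥ u := by
      rw [← sum_Ek (q := q) (m := m), kronecker_sumR, sum_mulVec, dot_sum]
    rw [h1]
    obtain ⟨he, h0, h1'⟩ := key 1 hone.1 hone.2
    rw [he]
    -- qf(E0⊗1) + qf(E1⊗1) = u ⬝ᵥ u
    have hadd : u ⬝ᵥ (E0 q ⊗ₖ (1 : Matrix (Fin m → Fin q) (Fin m → Fin q) ℝ)) *ᵥ u
        + u ⬝ᵥ (E1 q ⊗ₖ (1 : Matrix (Fin m → Fin q) (Fin m → Fin q) ℝ)) *ᵥ u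
        = u ⬝ᵥ u := by
      rw [← dotProduct_add, ← Matrix.add_mulVec, ← Matrix.add_kronecker,
        E0_add_E1, Matrix.one_kronecker_one, Matrix.one_mulVec]
    linarith
  rw [GGt hq, sum_mulVec, dot_sum]
  simp_rw [Matrix.smul_mulVec, dotProduct_smul, smul_eq_mul]
  calc ∑ k ∈ Finset.range (m + 1), β k ^ 2 * (u ⬝ᵥ ((E0 q + 2 • E1 q) ⊗ₖ Ek q m k) *ᵥ u)
      ≤ ∑ k ∈ Finset.range (m + 1), B * (u ⬝ᵥ ((E0 q + 2 • E1 q) ⊗ₖ Ek q m k) *ᵥ u) :=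
        Finset.sum_le_sum fun k hk => mul_le_mul_of_nonneg_right (hB k hk) (hqf k)
    _ = B * ∑ k ∈ Finset.range (m + 1), u ⬝ᵥ ((E0 q + 2 • E1 q) ⊗ₖ Ek q m k) *ᵥ u := by
        rw [Finset.mul_sum]
    _ ≤ B * (2 * (u ⬝ᵥ u)) := mul_le_mul_of_nonneg_left hsum hB0
    _ = 2 * B * (u ⬝ᵥ u) := by ring

lemma dot_GtGt {ι κ : Type*} [Fintype ι] [Fintype κ] (G : Matrix ι κ ℝ) (u : ι → ℝ) :
    (Gᵀ *ᵥ u) ⬝ᵥ (Gᵀ *ᵥ u) = u ⬝ᵥ (G * Gᵀ) *ᵥ u := by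
  rw [Matrix.dotProduct_mulVec, Matrix.vecMul_transpose, Matrix.mulVec_mulVec,
    dotProduct_comm]

-- the mulVec bound
lemma mulVec_G_le (hq : 1 ≤ q) (β : ℕ → ℝ) (B : ℝ) (hB0 : 0 ≤ B)
    (hB : ∀ k ∈ Finset.range (m + 1), β k ^ 2 ≤ B)
    (w : (Fin q × Fin q) × (Fin m → Fin q) → ℝ) :
    (Gmat q m β *ᵥ w) ⬝ᵥ (Gmat q m β *ᵥ w) ≤ 2 * B * (w ⬝ᵥ w) := by
  set G := Gmat q m β with hG
  set u := G *ᵥ w with hu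
  set X := u ⬝ᵥ u with hX
  have hX0 : 0 ≤ X := Finset.sum_nonneg fun i _ => mul_self_nonneg _
  have hW0 : 0 ≤ w ⬝ᵥ w := Finset.sum_nonneg fun i _ => mul_self_nonneg _
  have hXeq : X = (Gᵀ *ᵥ u) ⬝ᵥ w := by
    rw [hX, hu]
    conv_lhs => rw [Matrix.dotProduct_mulVec]
    congr 1
    rw [Matrix.mulVec_transpose]
  have hCS : X ^ 2 ≤ ((Gᵀ *ᵥ u) ⬝ᵥ (Gᵀ *ᵥ u)) * (w ⬝ᵥ w) := by
    rw [hXeq]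
    have := Finset.sum_mul_sq_le_sq_mul_sq Finset.univ (Gᵀ *ᵥ u) w
    calc ((Gᵀ *ᵥ u) ⬝ᵥ w) ^ 2 = (∑ i, (Gᵀ *ᵥ u) i * w i) ^ 2 := rfl
      _ ≤ (∑ i, ((Gᵀ *ᵥ u) i) ^ 2) * (∑ i, (w i) ^ 2) := this
      _ = ((Gᵀ *ᵥ u) ⬝ᵥ (Gᵀ *ᵥ u)) * (w ⬝ᵥ w) := by
          simp [dotProduct, sq]
  have hGt : (Gᵀ *ᵥ u) ⬝ᵥ (Gᵀ *ᵥ u) = u ⬝ᵥ (G * Gᵀ) *ᵥ u := dot_GtGt G u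
  have hQF : u ⬝ᵥ (G * Gᵀ) *ᵥ u ≤ 2 * B * X := qf_G_le hq β B hB0 hB u
  have h2 : X ^ 2 ≤ 2 * B * X * (w ⬝ᵥ w) := by
    calc X ^ 2 ≤ ((Gᵀ *ᵥ u) ⬝ᵥ (Gᵀ *ᵥ u)) * (w ⬝ᵥ w) := hCS
      _ = (u ⬝ᵥ (G * Gᵀ) *ᵥ u) * (w ⬝ᵥ w) := by rw [hGt]
      _ ≤ (2 * B * X) * (w ⬝ᵥ w) := mul_le_mul_of_nonneg_right hQF hW0
  rcases eq_or_lt_of_le hX0 with h | h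
  · rw [← h]; positivity
  · have := le_of_mul_le_mul_right (by nlinarith [h2] : X * X ≤ (2 * B * (w ⬝ᵥ w)) * X) h
    exact this


-- embCompl facts
lemma embCompl_mem {a b : Fin n} (h : a ≠ b) (i : Fin (n - 2)) :
    embCompl a b h i ∈ ({a, b}ᶜ : Finset (Fin n)) := by
  exact (({a, b}ᶜ : Finset (Fin n)).orderIsoOfFin _ i).2

lemma embCompl_ne_a {a b : Fin n} (h : a ≠ b) (i : Fin (n - 2)) :
    embCompl a b h i ≠ a := by
  have := embCompl_mem h i
  simp only [Finset.mem_compl, Finset.mem_insert, Finset.mem_singleton, not_or] at this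
  exact this.1

lemma embCompl_ne_b {a b : Fin n} (h : a ≠ b) (i : Fin (n - 2)) :
    embCompl a b h i ≠ b := by
  have := embCompl_mem h i
  simp only [Finset.mem_compl, Finset.mem_insert, Finset.mem_singleton, not_or] at this
  exact this.2

lemma embCompl_inj {a b : Fin n} (h : a ≠ b) : Function.Injective (embCompl a b h) := by
  intro i j hij
  exact (Finset.orderIsoOfFin _ _).injective (Subtype.ext hij)

lemma embCompl_surj {a b : Fin n} (h : a ≠ b) (j : Fin n) (hja : j ≠ a) (hjb : j ≠ b) :
    ∃ i, embCompl a b h i = j := by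
  have hmem : j ∈ ({a, b}ᶜ : Finset (Fin n)) := by
    simp [Finset.mem_compl, hja, hjb]
  exact ⟨(({a, b}ᶜ : Finset (Fin n)).orderIsoOfFin
    (by rw [Finset.card_compl, Finset.card_pair h, Fintype.card_fin])).symm ⟨j, hmem⟩, by
      simp [embCompl]⟩

/-- the column reindexing map -/
def colMap (a b : Fin n) (h : a ≠ b) (y : Fin n → Fin q) :
    (Fin q × Fin q) × (Fin (n - 2) → Fin q) :=
  ((y a, y b), fun i => y (embCompl a b h i))

lemma colMap_bij (hn : 2 ≤ n) (a b : Fin n) (h : a ≠ b) :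
    Function.Bijective (colMap (q := q) a b h) := by
  rw [Fintype.bijective_iff_injective_and_card]
  constructor
  · intro y y' hyy
    simp only [colMap, Prod.mk.injEq] at hyy
    funext j
    by_cases hja : j = a
    · subst hja; exact hyy.1.1
    by_cases hjb : j = b
    · subst hjb; exact hyy.1.2
    obtain ⟨i, hi⟩ := embCompl_surj h j hja hjb
    have := congrFun hyy.2 i
    rwa [hi] at this
  · simp only [Fintype.card_prod, Fintype.card_fun, Fintype.card_fin]
    conv_lhs => rw [show n = 2 + (n - 2) by omega]
    rw [pow_add, sq]

/-- the row reindexing map -/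
def rowMap (a b : Fin n) (h : a ≠ b) (x : {x : Fin n → Fin q // x a = x b}) :
    Fin q × (Fin (n - 2) → Fin q) :=
  (x.1 a, fun i => x.1 (embCompl a b h i))

lemma rowMap_inj (a b : Fin n) (h : a ≠ b) :
    Function.Injective (rowMap (q := q) a b h) := by
  intro x x' hxx
  simp only [rowMap, Prod.mk.injEq] at hxx
  apply Subtype.ext
  funext j
  by_cases hja : j = a
  · subst hja; exact hxx.1
  by_cases hjb : j = b
  · subst hjb; rw [← x.2, ← x'.2]; exact hxx.1
  obtain ⟨i, hi⟩ := embCompl_surj h j hja hjb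
  have := congrFun hxx.2 i
  rwa [hi] at this

lemma pair_bound (hn : 2 ≤ n) (c : ℝ) (hc : 0 ≤ c)
    (M : Matrix (Fin q × (Fin (n - 2) → Fin q)) ((Fin q × Fin q) × (Fin (n - 2) → Fin q)) ℝ)
    (hM : ∀ w, (M *ᵥ w) ⬝ᵥ (M *ᵥ w) ≤ c * (w ⬝ᵥ w))
    (a b : Fin n) (h : a ≠ b) (v : (Fin n → Fin q) → ℝ) :
    ∑ x : {x : Fin n → Fin q // x a = x b}, ((subMat M a b h *ᵥ v) x) ^ 2
      ≤ c * ∑ y, (v y) ^ 2 := by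
  set e := Equiv.ofBijective _ (colMap_bij (q := q) hn a b h) with he
  set w : ((Fin q × Fin q) × (Fin (n - 2) → Fin q)) → ℝ := fun cc => v (e.symm cc) with hw
  have hmv : ∀ x, (subMat M a b h *ᵥ v) x = (M *ᵥ w) (rowMap a b h x) := by
    intro x
    show ∑ y, subMat M a b h x y * v y = ∑ cc, M (rowMap a b h x) cc * w cc
    rw [← Equiv.sum_comp e (fun cc => M (rowMap a b h x) cc * w cc)]
    refine Finset.sum_congr rfl fun y _ => ?_
    have h1 : e y = colMap a b h y := rfl
    have h2 : w (e y) = v y := by rw [hw]; simp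
    rw [← h2, h1]
    rfl
  simp_rw [hmv]
  have hstep : ∑ x : {x : Fin n → Fin q // x a = x b}, ((M *ᵥ w) (rowMap a b h x)) ^ 2
      ≤ ∑ r, ((M *ᵥ w) r) ^ 2 := by
    rw [← Finset.sum_image (f := fun r => ((M *ᵥ w) r) ^ 2)
      (g := rowMap a b h) (s := Finset.univ)
      (fun x _ y _ hxy => rowMap_inj a b h hxy)]
    exact Finset.sum_le_sum_of_subset_of_nonneg (Finset.subset_univ _)
      (fun r _ _ => sq_nonneg _)
  refine le_trans hstep ?_
  have h1 : ∑ r, ((M *ᵥ w) r) ^ 2 = (M *ᵥ w) ⬝ᵥ (M *ᵥ w) := by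
    simp [dotProduct, sq]
  have h2 : w ⬝ᵥ w = ∑ y, (v y) ^ 2 := by
    rw [show (w ⬝ᵥ w) = ∑ cc, (v (e.symm cc)) ^ 2 by simp [dotProduct, hw, sq]]
    exact Equiv.sum_comp e.symm (fun y => (v y) ^ 2)
  rw [h1, ← h2]
  exact hM w

lemma two_card_le (n : ℕ) :
    2 * Fintype.card {p : Fin n × Fin n // p.1 < p.2} ≤ n ^ 2 := by
  rw [Fintype.card_subtype]
  set s := Finset.univ.filter (fun p : Fin n × Fin n => p.1 < p.2) with hs
  set t := Finset.univ.filter (fun p : Fin n × Fin n => p.2 < p.1) with ht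
  have hcard : s.card = t.card := by
    refine Finset.card_bij (fun p _ => (p.2, p.1)) ?_ ?_ ?_
    · intro p hp
      simp only [hs, ht, Finset.mem_filter, Finset.mem_univ, true_and] at hp ⊢
      exact hp
    · intro p hp p' hp' hpp
      simp only [Prod.mk.injEq] at hpp
      exact Prod.ext hpp.2 hpp.1
    · intro p hp
      simp only [ht, Finset.mem_filter, Finset.mem_univ, true_and] at hp
      exact ⟨(p.2, p.1), by simp [hs, hp], rfl⟩
  have hdisj : Disjoint s t := by
    rw [Finset.disjoint_left]
    intro p hp hpt
    simp only [hs, ht, Finset.mem_filter, Finset.mem_univ, true_and] at hp hpt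
    exact absurd hpt (lt_asymm hp)
  have hunion : s.card + t.card ≤ n * n := by
    rw [← Finset.card_union_of_disjoint hdisj]
    calc (s ∪ t).card ≤ (Finset.univ : Finset (Fin n × Fin n)).card :=
          Finset.card_le_card (Finset.subset_univ _)
      _ = n * n := by simp [Finset.card_univ]
  have : 2 * s.card = s.card + t.card := by omega
  rw [this] 
  calc s.card + t.card ≤ n * n := hunion
    _ = n ^ 2 := (sq n).symm

end EDProof

open ED in
/-- For `G = Σ_k β_k (F ⊗ E_k^{(n−2)})` and `Γ′` the stacking of the `G_{a,b}`,
one has `‖Γ′‖² ≤ n² · max_{0 ≤ k ≤ n−2} β_k²`. -/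
theorem stmt10 (n q : ℕ) (hn : 2 ≤ n) (hq : 1 ≤ q) (β : ℕ → ℝ)
    (Γ' : Matrix ((p : {p : Fin n × Fin n // p.1 < p.2}) ×
        {x : Fin n → Fin q // x p.1.1 = x p.1.2}) (Fin n → Fin q) ℝ)
    (hΓ' : Γ' = stacked (Matrix.of fun r c =>
        ∑ k ∈ Finset.range (n - 1), β k * (FF q r.1 c.1 * Ek q (n - 2) k r.2 c.2))) :
    specNorm Γ' ^ 2 ≤ (n : ℝ) ^ 2 *
      (Finset.range (n - 1)).sup' (by simp; omega) (fun k => β k ^ 2) := by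
  classical
  set m := n - 2 with hmdef
  have hm : n - 1 = m + 1 := by omega
  set B : ℝ := (Finset.range (n - 1)).sup' (by simp; omega) (fun k => β k ^ 2) with hBdef
  have hBk : ∀ k ∈ Finset.range (m + 1), β k ^ 2 ≤ B := by
    intro k hk
    exact Finset.le_sup' (fun k => β k ^ 2) (by rwa [hm])
  have hB0 : 0 ≤ B := le_trans (sq_nonneg (β 0))
    (Finset.le_sup' (fun k => β k ^ 2) (by simp; omega))
  -- identify the matrix G with Gmat
  have hGm : (Matrix.of fun (r : Fin q × (Fin (n-2) → Fin q))
        (c : (Fin q × Fin q) × (Fin (n-2) → Fin q)) =>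
        ∑ k ∈ Finset.range (n - 1), β k * (FF q r.1 c.1 * Ek q (n - 2) k r.2 c.2))
      = EDProof.Gmat q m β := by
    ext r c
    rw [hm]
    simp [EDProof.Gmat, Matrix.sum_apply, Matrix.smul_apply, Matrix.kroneckerMap_apply,
      smul_eq_mul, mul_assoc]
    rfl
  rw [hGm] at hΓ'
  -- the key bound on squared column sums
  have hMbound := EDProof.mulVec_G_le (m := m) hq β B hB0 hBk
  -- the total quadratic bound
  have key : ∀ v : (Fin n → Fin q) → ℝ,
      ∑ r, ((Γ'.mulVec v) r) ^ 2 ≤ (n : ℝ) ^ 2 * B * ∑ y, (v y) ^ 2 := by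
    intro v
    have hsig : ∑ r, ((Γ'.mulVec v) r) ^ 2
        = ∑ p : {p : Fin n × Fin n // p.1 < p.2},
            ∑ x : {x : Fin n → Fin q // x p.1.1 = x p.1.2}, ((Γ'.mulVec v) ⟨p, x⟩) ^ 2 := by
      rw [← Finset.univ_sigma_univ, Finset.sum_sigma]
    rw [hsig]
    have hpair : ∀ p : {p : Fin n × Fin n // p.1 < p.2},
        ∑ x : {x : Fin n → Fin q // x p.1.1 = x p.1.2}, ((Γ'.mulVec v) ⟨p, x⟩) ^ 2
          ≤ 2 * B * ∑ y, (v y) ^ 2 := by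
      intro p
      have hform : ∀ x : {x : Fin n → Fin q // x p.1.1 = x p.1.2},
          (Γ'.mulVec v) ⟨p, x⟩
            = ((subMat (EDProof.Gmat q m β) p.1.1 p.1.2 (ne_of_lt p.2)).mulVec v) x := by
        intro x
        rw [hΓ']
        rfl
      simp_rw [hform]
      exact EDProof.pair_bound hn (2 * B) (by positivity) _ hMbound _ _ _ v
    calc ∑ p : {p : Fin n × Fin n // p.1 < p.2},
        ∑ x : {x : Fin n → Fin q // x p.1.1 = x p.1.2}, ((Γ'.mulVec v) ⟨p, x⟩) ^ 2
        ≤ ∑ _p : {p : Fin n × Fin n // p.1 < p.2}, 2 * B * ∑ y, (v y) ^ 2 :=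
          Finset.sum_le_sum fun p _ => hpair p
      _ = (Fintype.card {p : Fin n × Fin n // p.1 < p.2} : ℝ) * (2 * B * ∑ y, (v y) ^ 2) := by
          rw [Finset.sum_const, Finset.card_univ, nsmul_eq_mul]
      _ ≤ (n : ℝ) ^ 2 * B * ∑ y, (v y) ^ 2 := by
          have h2c := EDProof.two_card_le n
          have hT : (0:ℝ) ≤ ∑ y, (v y) ^ 2 := Finset.sum_nonneg fun y _ => sq_nonneg _
          have hcast : (2 : ℝ) * (Fintype.card {p : Fin n × Fin n // p.1 < p.2} : ℝ)
              ≤ (n : ℝ) ^ 2 := by exact_mod_cast h2c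
          nlinarith [mul_nonneg hB0 hT,
            mul_le_mul_of_nonneg_right hcast (mul_nonneg hB0 hT)]
  -- translate to the operator norm
  have hspec : specNorm Γ' ≤ Real.sqrt ((n : ℝ) ^ 2 * B) := by
    refine ContinuousLinearMap.opNorm_le_bound _ (Real.sqrt_nonneg _) fun v => ?_
    have happ : ∀ i, (LinearMap.toContinuousLinearMap (Matrix.toEuclideanLin Γ')) v i
        = (Γ'.mulVec (fun j => v j)) i := fun i => rfl
    rw [EuclideanSpace.norm_eq, EuclideanSpace.norm_eq]
    rw [← Real.sqrt_mul (by positivity)]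
    apply Real.sqrt_le_sqrt
    calc ∑ i, ‖(LinearMap.toContinuousLinearMap (Matrix.toEuclideanLin Γ')) v i‖ ^ 2
        = ∑ i, ((Γ'.mulVec (fun j => v j)) i) ^ 2 := by
          refine Finset.sum_congr rfl fun i _ => ?_
          rw [happ i, Real.norm_eq_abs, sq_abs]
      _ ≤ (n : ℝ) ^ 2 * B * ∑ y, ((fun j => v j) y) ^ 2 := key _
      _ = (n : ℝ) ^ 2 * B * ∑ y, ‖v y‖ ^ 2 := by
          congr 1
          exact Finset.sum_congr rfl fun y _ => by rw [Real.norm_eq_abs, sq_abs]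
  have hfin := pow_le_pow_left₀ (norm_nonneg _) hspec 2
  rw [Real.sq_sqrt (by positivity)] at hfin
  exact hfin
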